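/- Localization of large matrices: Let A be an (N+1)×(N+1) Hermitian matrix, and let A^k denote the matrix keeping only the k-th supra- and infra-diagonal of A. Let ψ ∈ ℂ^{N+1} be a unit vector, d_k = ⟨ψ, A^k ψ⟩, λ = ⟨ψ, Aψ⟩ = Σ_{k=0}^N d_k. For any integer 1 ≤ M ≤ N+1 there exist n ∈ [0, N+1-M] and a unit vector φ ∈ ℂ^{N+1} supported on indices n+1,…,n+M such that ⟨φ, Aφ⟩ ≤ λ + (C/M²) Σ_{k=1}^{M-1} k² |d_k| + C Σ_{k=M}^N |d_k|, where C is a universal constant. -/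

import Mathlib

open Matrix

/-- The `k`-th supra-plus-infra-diagonal part `A^k` of a matrix `A`. -/
def offDiagPart {N : ℕ} (A : Matrix (Fin (N + 1)) (Fin (N + 1)) ℂ) (k : ℕ) :
    Matrix (Fin (N + 1)) (Fin (N + 1)) ℂ :=
  Matrix.of fun i j => if ((i : ℤ) - (j : ℤ)).natAbs = k then A i j else 0

/-- Triangle cutoff function on `{0,...,M-1}` (integer valued). -/
def fzLoc (M : ℕ) (m : ℤ) : ℤ := if 0 ≤ m ∧ m < M then min (m + 1) ((M : ℤ) - m) else 0

/-- Real version of the cutoff. -/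
noncomputable def frLoc (M : ℕ) (m : ℤ) : ℝ := (fzLoc M m : ℝ)

lemma fzLoc_eq_zero {M : ℕ} {m : ℤ} (h : m < 0 ∨ (M : ℤ) ≤ m) : fzLoc M m = 0 := by
  simp only [fzLoc]; split_ifs <;> omega

lemma frLoc_eq_zero {M : ℕ} {m : ℤ} (h : m < 0 ∨ (M : ℤ) ≤ m) : frLoc M m = 0 := by
  rw [frLoc, fzLoc_eq_zero h]; norm_num

lemma fzLoc_nonneg (M : ℕ) (m : ℤ) : 0 ≤ fzLoc M m := by
  simp only [fzLoc]; split_ifs <;> omega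

lemma frLoc_nonneg (M : ℕ) (m : ℤ) : 0 ≤ frLoc M m := by
  rw [frLoc]; exact_mod_cast fzLoc_nonneg M m

lemma frLoc_lip (M : ℕ) (a b : ℤ) : (frLoc M a - frLoc M b) ^ 2 ≤ ((a : ℝ) - b) ^ 2 := by
  have h : (fzLoc M a - fzLoc M b).natAbs ≤ (a - b).natAbs := by
    simp only [fzLoc]; split_ifs <;> omega
  have h2 : |fzLoc M a - fzLoc M b| ≤ |a - b| := by
    rw [Int.abs_eq_natAbs, Int.abs_eq_natAbs]; exact_mod_cast h
  have h3 : (fzLoc M a - fzLoc M b) ^ 2 ≤ (a - b) ^ 2 := by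
    rw [← sq_abs (fzLoc M a - fzLoc M b), ← sq_abs (a - b)]
    exact pow_le_pow_left₀ (abs_nonneg _) h2 2
  have : ((fzLoc M a - fzLoc M b : ℤ) : ℝ) ^ 2 ≤ ((a - b : ℤ) : ℝ) ^ 2 := by exact_mod_cast h3
  rw [frLoc, frLoc]; push_cast at this ⊢; linarith

lemma sum_frLoc_subset {M : ℕ} (g : ℤ → ℝ) {s : Finset ℤ}
    (hs : Finset.Ico (0 : ℤ) (M : ℤ) ⊆ s) :
    ∑ m ∈ s, frLoc M m * g m = ∑ m ∈ Finset.Ico (0 : ℤ) (M : ℤ), frLoc M m * g m := by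
  refine (Finset.sum_subset hs fun m _ hm => ?_).symm
  rw [frLoc_eq_zero, zero_mul]
  simp only [Finset.mem_Ico] at hm; omega

/-- Correlation of the cutoff with its translate. -/
noncomputable def czLoc (M : ℕ) (d : ℤ) : ℝ :=
  ∑ m ∈ Finset.Ico (0 : ℤ) (M : ℤ), frLoc M m * frLoc M (m - d)

lemma czLoc_eq_sum {M : ℕ} (d : ℤ) {s : Finset ℤ}
    (hs : Finset.Ico (0 : ℤ) (M : ℤ) ⊆ s) :
    ∑ m ∈ s, frLoc M m * frLoc M (m - d) = czLoc M d :=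
  sum_frLoc_subset _ hs

lemma czLoc_neg (M : ℕ) (d : ℤ) : czLoc M (-d) = czLoc M d := by
  rw [← czLoc_eq_sum (M := M) d (s := Finset.Ico (min 0 d) ((M : ℤ) + max 0 d))
      (fun x hx => by simp only [Finset.mem_Ico] at *; omega),
    ← czLoc_eq_sum (M := M) (-d) (s := Finset.Ico (min 0 (-d)) ((M : ℤ) + max 0 (-d)))
      (fun x hx => by simp only [Finset.mem_Ico] at *; omega)]
  refine Finset.sum_nbij' (fun m => m + d) (fun m => m - d) ?_ ?_ ?_ ?_ ?_
  · intro a ha; simp only [Finset.mem_Ico] at *; omega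
  · intro a ha; simp only [Finset.mem_Ico] at *; omega
  · intro a _; ring
  · intro a _; ring
  · intro a _; rw [sub_neg_eq_add, mul_comm]; congr 2; ring

lemma czLoc_natAbs (M : ℕ) (d : ℤ) : czLoc M d = czLoc M (d.natAbs : ℤ) := by
  rcases Int.natAbs_eq d with h | h
  · rw [← h]
  · conv_lhs => rw [h]
    exact czLoc_neg M _

lemma sum_sq_frLoc {M : ℕ} {s : Finset ℤ} (hs : Finset.Ico (0 : ℤ) (M : ℤ) ⊆ s) :
    ∑ m ∈ s, (frLoc M m) ^ 2 = czLoc M 0 := by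
  rw [← czLoc_eq_sum 0 hs]
  exact Finset.sum_congr rfl fun m _ => by rw [sub_zero, sq]

lemma sum_sq_frLoc_shift (M k : ℕ) :
    ∑ m ∈ Finset.Ico (0 : ℤ) ((M : ℤ) + k), (frLoc M (m - k)) ^ 2 = czLoc M 0 := by
  rw [show ∑ m ∈ Finset.Ico (0 : ℤ) ((M : ℤ) + k), (frLoc M (m - k)) ^ 2
      = ∑ m ∈ Finset.Ico (-(k : ℤ)) (M : ℤ), (frLoc M m) ^ 2 from
    Finset.sum_nbij' (fun m => m - k) (fun m => m + k)
      (fun a ha => by simp only [Finset.mem_Ico] at *; omega)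
      (fun a ha => by simp only [Finset.mem_Ico] at *; omega)
      (fun a _ => by ring) (fun a _ => by ring) (fun a _ => rfl)]
  exact sum_sq_frLoc (fun x hx => by simp only [Finset.mem_Ico] at *; omega)

lemma quad_id (M k : ℕ) :
    ∑ m ∈ Finset.Ico (0 : ℤ) ((M : ℤ) + k), (frLoc M m - frLoc M (m - k)) ^ 2
      = 2 * (czLoc M 0 - czLoc M k) := by
  have h1 : ∑ m ∈ Finset.Ico (0 : ℤ) ((M : ℤ) + k), (frLoc M m) ^ 2 = czLoc M 0 :=
    sum_sq_frLoc (fun x hx => by simp only [Finset.mem_Ico] at *; omega)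
  have h2 := sum_sq_frLoc_shift M k
  have h3 : ∑ m ∈ Finset.Ico (0 : ℤ) ((M : ℤ) + k), frLoc M m * frLoc M (m - k) = czLoc M k :=
    czLoc_eq_sum _ (fun x hx => by simp only [Finset.mem_Ico] at *; omega)
  have expand : ∑ m ∈ Finset.Ico (0 : ℤ) ((M : ℤ) + k), (frLoc M m - frLoc M (m - k)) ^ 2
      = ∑ m ∈ Finset.Ico (0 : ℤ) ((M : ℤ) + k),
          ((frLoc M m) ^ 2 + (frLoc M (m - k)) ^ 2 - 2 * (frLoc M m * frLoc M (m - k))) :=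
    Finset.sum_congr rfl fun m _ => by ring
  rw [expand, Finset.sum_sub_distrib, Finset.sum_add_distrib, ← Finset.mul_sum, h1, h2, h3]
  ring

lemma czLoc_le (M k : ℕ) : czLoc M k ≤ czLoc M 0 := by
  have h := quad_id M k
  have h2 : (0:ℝ) ≤ ∑ m ∈ Finset.Ico (0 : ℤ) ((M : ℤ) + k), (frLoc M m - frLoc M (m - k)) ^ 2 :=
    Finset.sum_nonneg fun m _ => sq_nonneg _
  linarith

lemma czLoc_diff_le (M k : ℕ) (hk : k ≤ M) : czLoc M 0 - czLoc M k ≤ (M : ℝ) * k ^ 2 := by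
  have h := quad_id M k
  have hb : ∀ m ∈ Finset.Ico (0 : ℤ) ((M : ℤ) + k),
      (frLoc M m - frLoc M (m - k)) ^ 2 ≤ (k : ℝ) ^ 2 := by
    intro m _
    have := frLoc_lip M m (m - k)
    have he : ((m : ℝ) - (m - k : ℤ)) ^ 2 = (k : ℝ) ^ 2 := by push_cast; ring
    rw [he] at this; exact this
  have hcard : (Finset.Ico (0 : ℤ) ((M : ℤ) + k)).card = M + k := by
    rw [Int.card_Ico]; omega
  have h2 := Finset.sum_le_card_nsmul _ _ _ hb
  rw [hcard, nsmul_eq_mul] at h2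
  have hk' : (k : ℝ) ≤ (M : ℝ) := Nat.cast_le.mpr hk
  have hc : ((M + k : ℕ) : ℝ) = (M : ℝ) + (k : ℝ) := by push_cast; ring
  rw [hc] at h2
  nlinarith [mul_le_mul_of_nonneg_right hk' (sq_nonneg (k : ℝ))]

lemma czLoc_eq_zero_of_ge (M k : ℕ) (hk : M ≤ k) : czLoc M k = 0 := by
  refine Finset.sum_eq_zero fun m hm => ?_
  simp only [Finset.mem_Ico] at hm
  rw [frLoc_eq_zero (M := M) (m := m - k) (by omega), mul_zero]

lemma czLoc_zero_ge (M : ℕ) (hM : 1 ≤ M) : (M : ℝ) ^ 3 / 27 ≤ czLoc M 0 := by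
  set q := M / 3 with hq
  have hsub : Finset.Ico (q : ℤ) ((M : ℤ) - q) ⊆ Finset.Ico (0 : ℤ) (M : ℤ) := by
    intro x hx; simp only [Finset.mem_Ico] at *; omega
  have hlb : ∀ m ∈ Finset.Ico (q : ℤ) ((M : ℤ) - q),
      ((q : ℝ) + 1) ^ 2 ≤ frLoc M m * frLoc M (m - 0) := by
    intro m hm
    simp only [Finset.mem_Ico] at hm
    have hfz : (q : ℤ) + 1 ≤ fzLoc M m := by
      simp only [fzLoc]; split_ifs <;> omega
    have hfr : (q : ℝ) + 1 ≤ frLoc M m := by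
      rw [frLoc]; exact_mod_cast hfz
    have h0 : (0:ℝ) ≤ (q:ℝ) + 1 := by positivity
    rw [sub_zero]; nlinarith
  have h2 := Finset.card_nsmul_le_sum _ _ _ hlb
  have hsum : ∑ m ∈ Finset.Ico (q : ℤ) ((M : ℤ) - q), frLoc M m * frLoc M (m - 0)
      ≤ czLoc M 0 := by
    have : czLoc M 0 = ∑ m ∈ Finset.Ico (0:ℤ) (M:ℤ), frLoc M m * frLoc M (m - 0) := rfl
    rw [this]
    refine Finset.sum_le_sum_of_subset_of_nonneg hsub fun m _ _ =>
      mul_nonneg (frLoc_nonneg M m) (frLoc_nonneg M _)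
  have hcard : (Finset.Ico (q : ℤ) ((M : ℤ) - q)).card = M - 2 * q := by
    rw [Int.card_Ico]; omega
  rw [hcard, nsmul_eq_mul] at h2
  have hcast : ((M - 2 * q : ℕ) : ℝ) = (M : ℝ) - 2 * q := by
    have : 2 * q ≤ M := by omega
    push_cast [this]; ring
  rw [hcast] at h2
  have hq0 : (0:ℝ) ≤ (q:ℝ) := Nat.cast_nonneg q
  have hM3 : M = 3 * q ∨ M = 3 * q + 1 ∨ M = 3 * q + 2 := by omega
  have key : (M:ℝ)^3/27 ≤ ((M:ℝ) - 2*q) * ((q:ℝ)+1)^2 := by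
    rcases hM3 with h | h | h
    · have hMr : (M:ℝ) = 3*(q:ℝ) := by rw [h]; push_cast; ring
      rw [hMr]; nlinarith
    · have hMr : (M:ℝ) = 3*(q:ℝ) + 1 := by rw [h]; push_cast; ring
      rw [hMr]; nlinarith
    · have hMr : (M:ℝ) = 3*(q:ℝ) + 2 := by rw [h]; push_cast; ring
      rw [hMr]; nlinarith
  linarith

lemma sum_shift_loc (M N : ℕ) (i j : ℤ) (hi0 : 0 ≤ i) (hiN : i ≤ N) :
    ∑ n ∈ Finset.Icc (1 - (M : ℤ)) (N : ℤ), frLoc M (i - n) * frLoc M (j - n)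
      = czLoc M ((i - j).natAbs : ℤ) := by
  rw [← czLoc_natAbs, ← czLoc_eq_sum (M := M) (i - j)
      (s := Finset.Icc (i - N) (i + M - 1))
      (fun x hx => by simp only [Finset.mem_Icc, Finset.mem_Ico] at *; omega)]
  refine Finset.sum_nbij' (fun n => i - n) (fun m => i - m) ?_ ?_ ?_ ?_ ?_
  · intro a ha; simp only [Finset.mem_Icc] at *; omega
  · intro a ha; simp only [Finset.mem_Icc] at *; omega
  · intro a _; ring
  · intro a _; ring
  · intro a _; congr 1; congr 1; ring

open Matrix

lemma dot_expand {n : ℕ} (B : Matrix (Fin n) (Fin n) ℂ) (u v : Fin n → ℂ) :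
    star u ⬝ᵥ B.mulVec v = ∑ i, ∑ j, (starRingEnd ℂ) (u i) * B i j * v j := by
  simp only [dotProduct, Matrix.mulVec, Pi.star_apply, Complex.star_def,
    Finset.mul_sum]
  exact Finset.sum_congr rfl fun i _ => Finset.sum_congr rfl fun j _ => by ring

lemma dot_expand' {n : ℕ} (u v : Fin n → ℂ) :
    star u ⬝ᵥ v = ∑ j, (starRingEnd ℂ) (u j) * v j := by
  simp only [dotProduct, Pi.star_apply, Complex.star_def]

section main
variable {N : ℕ} (A : Matrix (Fin (N+1)) (Fin (N+1)) ℂ) (ψ : Fin (N+1) → ℂ) (M : ℕ)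

lemma hval (k : ℕ) : star ψ ⬝ᵥ (offDiagPart A k).mulVec ψ
    = ∑ i : Fin (N+1), ∑ j : Fin (N+1), (if (((i:ℤ) - (j:ℤ)).natAbs) = k
        then (starRingEnd ℂ) (ψ i) * A i j * ψ j else 0) := by
  rw [dot_expand]
  refine Finset.sum_congr rfl fun i _ => Finset.sum_congr rfl fun j _ => ?_
  simp only [offDiagPart, Matrix.of_apply]
  split_ifs <;> simp

lemma hcollapse (c : ℕ → ℝ) :
    ∑ k ∈ Finset.range (N+1), ((c k : ℝ) : ℂ) * (star ψ ⬝ᵥ (offDiagPart A k).mulVec ψ)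
      = ∑ i : Fin (N+1), ∑ j : Fin (N+1), ((c ((((i:ℤ) - (j:ℤ)).natAbs)) : ℝ) : ℂ) *
          ((starRingEnd ℂ) (ψ i) * A i j * ψ j) := by
  have step1 : ∀ k ∈ Finset.range (N+1),
      ((c k : ℝ) : ℂ) * (star ψ ⬝ᵥ (offDiagPart A k).mulVec ψ)
        = ∑ i : Fin (N+1), ∑ j : Fin (N+1), (if (((i:ℤ) - (j:ℤ)).natAbs) = k
            then ((c k : ℝ) : ℂ) * ((starRingEnd ℂ) (ψ i) * A i j * ψ j) else 0) := by
    intro k _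
    rw [hval A ψ k, Finset.mul_sum]
    refine Finset.sum_congr rfl fun i _ => ?_
    rw [Finset.mul_sum]
    refine Finset.sum_congr rfl fun j _ => ?_
    split_ifs <;> simp
  rw [Finset.sum_congr rfl step1, Finset.sum_comm]
  refine Finset.sum_congr rfl fun i _ => ?_
  rw [Finset.sum_comm]
  refine Finset.sum_congr rfl fun j _ => ?_
  have hmem : (((i:ℤ) - (j:ℤ)).natAbs) ∈ Finset.range (N+1) := by
    have hi := i.isLt
    have hj := j.isLt
    simp only [Finset.mem_range]
    omega
  rw [Finset.sum_ite_eq (Finset.range (N+1)) (((i:ℤ) - (j:ℤ)).natAbs)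
    (fun k => ((c k : ℝ) : ℂ) * ((starRingEnd ℂ) (ψ i) * A i j * ψ j)), if_pos hmem]

/-- The localized vector `χ_n = f(·-n) ψ`. -/
noncomputable def chiLoc (ψ : Fin (N+1) → ℂ) (M : ℕ) (n : ℤ) : Fin (N+1) → ℂ :=
  fun j => ((frLoc M ((j:ℤ) - n) : ℝ) : ℂ) * ψ j

lemma key2 :
    ∑ n ∈ Finset.Icc (1 - (M:ℤ)) (N:ℤ),
        star (chiLoc ψ M n) ⬝ᵥ A.mulVec (chiLoc ψ M n)
      = ∑ k ∈ Finset.range (N+1),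
          ((czLoc M k : ℝ):ℂ) * (star ψ ⬝ᵥ (offDiagPart A k).mulVec ψ) := by
  rw [hcollapse A ψ (fun k => czLoc M (k:ℤ))]
  calc ∑ n ∈ Finset.Icc (1 - (M:ℤ)) (N:ℤ),
        star (chiLoc ψ M n) ⬝ᵥ A.mulVec (chiLoc ψ M n)
      = ∑ n ∈ Finset.Icc (1 - (M:ℤ)) (N:ℤ), ∑ i : Fin (N+1), ∑ j : Fin (N+1),
          ((frLoc M ((i:ℤ) - n) * frLoc M ((j:ℤ) - n) : ℝ) : ℂ) *
            ((starRingEnd ℂ) (ψ i) * A i j * ψ j) := by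
        refine Finset.sum_congr rfl fun n _ => ?_
        rw [dot_expand]
        refine Finset.sum_congr rfl fun i _ => Finset.sum_congr rfl fun j _ => ?_
        simp only [chiLoc, _root_.map_mul, Complex.conj_ofReal]
        push_cast
        ring
    _ = ∑ i : Fin (N+1), ∑ j : Fin (N+1),
          ((∑ n ∈ Finset.Icc (1 - (M:ℤ)) (N:ℤ),
            frLoc M ((i:ℤ) - n) * frLoc M ((j:ℤ) - n) : ℝ) : ℂ) *
            ((starRingEnd ℂ) (ψ i) * A i j * ψ j) := by
        rw [Finset.sum_comm]
        refine Finset.sum_congr rfl fun i _ => ?_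
        rw [Finset.sum_comm]
        refine Finset.sum_congr rfl fun j _ => ?_
        rw [Complex.ofReal_sum, Finset.sum_mul]
    _ = ∑ i : Fin (N+1), ∑ j : Fin (N+1),
          ((czLoc M ((((i:ℤ) - (j:ℤ)).natAbs : ℕ) : ℤ) : ℝ) : ℂ) *
            ((starRingEnd ℂ) (ψ i) * A i j * ψ j) := by
        refine Finset.sum_congr rfl fun i _ => Finset.sum_congr rfl fun j _ => ?_
        rw [sum_shift_loc M N (i:ℤ) (j:ℤ) (by positivity) (by exact_mod_cast Nat.lt_succ_iff.mp i.isLt)]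

lemma key1 (hψ : star ψ ⬝ᵥ ψ = 1) :
    ∑ n ∈ Finset.Icc (1 - (M:ℤ)) (N:ℤ), star (chiLoc ψ M n) ⬝ᵥ (chiLoc ψ M n)
      = ((czLoc M 0 : ℝ) : ℂ) := by
  calc ∑ n ∈ Finset.Icc (1 - (M:ℤ)) (N:ℤ), star (chiLoc ψ M n) ⬝ᵥ (chiLoc ψ M n)
      = ∑ n ∈ Finset.Icc (1 - (M:ℤ)) (N:ℤ), ∑ j : Fin (N+1),
          ((frLoc M ((j:ℤ) - n) * frLoc M ((j:ℤ) - n) : ℝ) : ℂ) *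
            ((starRingEnd ℂ) (ψ j) * ψ j) := by
        refine Finset.sum_congr rfl fun n _ => ?_
        rw [dot_expand']
        refine Finset.sum_congr rfl fun j _ => ?_
        simp only [chiLoc, _root_.map_mul, Complex.conj_ofReal]
        push_cast
        ring
    _ = ∑ j : Fin (N+1),
          ((∑ n ∈ Finset.Icc (1 - (M:ℤ)) (N:ℤ),
            frLoc M ((j:ℤ) - n) * frLoc M ((j:ℤ) - n) : ℝ) : ℂ) *
            ((starRingEnd ℂ) (ψ j) * ψ j) := by
        rw [Finset.sum_comm]
        refine Finset.sum_congr rfl fun j _ => ?_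
        rw [Complex.ofReal_sum, Finset.sum_mul]
    _ = ((czLoc M 0 : ℝ) : ℂ) * (star ψ ⬝ᵥ ψ) := by
        rw [dot_expand', Finset.mul_sum]
        refine Finset.sum_congr rfl fun j _ => ?_
        rw [sum_shift_loc M N (j:ℤ) (j:ℤ) (by positivity) (by exact_mod_cast Nat.lt_succ_iff.mp j.isLt)]
        norm_num
    _ = ((czLoc M 0 : ℝ) : ℂ) := by rw [hψ, mul_one]

/-- The (real) norm squared of the localized vector. -/
noncomputable def wLoc (ψ : Fin (N+1) → ℂ) (M : ℕ) (n : ℤ) : ℝ :=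
  ∑ j : Fin (N+1), (frLoc M ((j:ℤ) - n)) ^ 2 * Complex.normSq (ψ j)

lemma wLoc_nonneg (n : ℤ) : 0 ≤ wLoc ψ M n :=
  Finset.sum_nonneg fun j _ => mul_nonneg (sq_nonneg _) (Complex.normSq_nonneg _)

lemma chi_norm (n : ℤ) :
    star (chiLoc ψ M n) ⬝ᵥ (chiLoc ψ M n) = ((wLoc ψ M n : ℝ) : ℂ) := by
  rw [dot_expand', wLoc, Complex.ofReal_sum]
  refine Finset.sum_congr rfl fun j _ => ?_
  simp only [chiLoc, _root_.map_mul, Complex.conj_ofReal]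
  have hns : (starRingEnd ℂ) (ψ j) * ψ j = ((Complex.normSq (ψ j) : ℝ) : ℂ) := by
    rw [mul_comm]; exact Complex.mul_conj (ψ j)
  push_cast
  calc (↑(frLoc M ((j:ℤ) - n)) : ℂ) * (starRingEnd ℂ) (ψ j) * (↑(frLoc M ((j:ℤ) - n)) * ψ j)
      = (↑(frLoc M ((j:ℤ) - n)) : ℂ) ^ 2 * ((starRingEnd ℂ) (ψ j) * ψ j) := by ring
    _ = ↑(frLoc M ((j:ℤ) - n)) ^ 2 * ↑(Complex.normSq (ψ j)) := by rw [hns]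

lemma chi_zero {n : ℤ} (h : wLoc ψ M n = 0) : chiLoc ψ M n = 0 := by
  funext j
  have := (Finset.sum_eq_zero_iff_of_nonneg
    (fun j _ => mul_nonneg (sq_nonneg _) (Complex.normSq_nonneg (ψ j)))).mp h j (Finset.mem_univ j)
  rcases mul_eq_zero.mp this with h1 | h2
  · simp only [chiLoc, Pi.zero_apply]
    rw [pow_eq_zero_iff (by norm_num)] at h1
    rw [h1]
    norm_num
  · simp only [chiLoc, Pi.zero_apply]
    rw [Complex.normSq_eq_zero.mp h2]
    norm_num

end main


/-- **Localization of large matrices.** For a Hermitian `(N+1)×(N+1)` matrix `A`, a unit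
vector `ψ`, `d_k = ⟨ψ, A^k ψ⟩`, `λ = ⟨ψ, Aψ⟩`, and any `1 ≤ M ≤ N+1`, there are
`n ≤ N+1-M` and a unit vector `φ` supported on `M` consecutive indices starting at `n`
with `⟨φ, Aφ⟩ ≤ λ + (C/M²) Σ_{k=1}^{M-1} k²|d_k| + C Σ_{k=M}^N |d_k|` for a universal
constant `C`. -/
theorem localization_of_large_matrices :
    ∃ C : ℝ, 0 < C ∧
      ∀ (N : ℕ) (A : Matrix (Fin (N + 1)) (Fin (N + 1)) ℂ), A.IsHermitian →
      ∀ ψ : Fin (N + 1) → ℂ, star ψ ⬝ᵥ ψ = 1 →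
      ∀ M : ℕ, 1 ≤ M → M ≤ N + 1 →
      ∃ n : ℕ, n ≤ N + 1 - M ∧
      ∃ φ : Fin (N + 1) → ℂ, star φ ⬝ᵥ φ = 1 ∧
        (∀ j : Fin (N + 1), ((j : ℕ) < n ∨ n + M ≤ (j : ℕ)) → φ j = 0) ∧
        (star φ ⬝ᵥ A.mulVec φ).re ≤
          (star ψ ⬝ᵥ A.mulVec ψ).re +
          (C / (M : ℝ) ^ 2) * ∑ k ∈ Finset.Ico 1 M,
            (k : ℝ) ^ 2 * ‖star ψ ⬝ᵥ (offDiagPart A k).mulVec ψ‖ +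
          C * ∑ k ∈ Finset.Icc M N,
            ‖star ψ ⬝ᵥ (offDiagPart A k).mulVec ψ‖ := by
  refine ⟨27, by norm_num, ?_⟩
  intro N A _hA ψ hψ M hM1 hM2
  set S : Finset ℤ := Finset.Icc (1 - (M:ℤ)) (N:ℤ) with hS
  set R : ℝ := (star ψ ⬝ᵥ A.mulVec ψ).re +
      27 / (M : ℝ) ^ 2 * ∑ k ∈ Finset.Ico 1 M,
        (k : ℝ) ^ 2 * ‖star ψ ⬝ᵥ (offDiagPart A k).mulVec ψ‖ +
      27 * ∑ k ∈ Finset.Icc M N,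
        ‖star ψ ⬝ᵥ (offDiagPart A k).mulVec ψ‖ with hR
  have hM0 : (0:ℝ) < (M:ℝ) := by exact_mod_cast hM1
  have hS0pos : 0 < czLoc M 0 :=
    lt_of_lt_of_le (by positivity) (czLoc_zero_ge M hM1)
  -- real energy sum identity
  have hTr_sum : ∑ n ∈ S, (star (chiLoc ψ M n) ⬝ᵥ A.mulVec (chiLoc ψ M n)).re
      = ∑ k ∈ Finset.range (N+1),
          czLoc M (k:ℤ) * (star ψ ⬝ᵥ (offDiagPart A k).mulVec ψ).re := by
    have h := congrArg Complex.re (key2 A ψ M)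
    rw [Complex.re_sum, Complex.re_sum] at h
    rw [h]
    refine Finset.sum_congr rfl fun k _ => ?_
    rw [Complex.mul_re]
    simp [Complex.ofReal_re, Complex.ofReal_im]
  have hlam_re : (star ψ ⬝ᵥ A.mulVec ψ).re
      = ∑ k ∈ Finset.range (N+1), (star ψ ⬝ᵥ (offDiagPart A k).mulVec ψ).re := by
    have h := hcollapse A ψ (fun _ => (1:ℝ))
    simp only [Complex.ofReal_one, one_mul] at h
    rw [← dot_expand] at h
    rw [← h, Complex.re_sum]
  -- the central estimate
  have hbound : ∑ k ∈ Finset.range (N+1),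
        czLoc M (k:ℤ) * (star ψ ⬝ᵥ (offDiagPart A k).mulVec ψ).re
      ≤ czLoc M 0 * R := by
    have hak : ∀ k, (0:ℝ) ≤ ‖star ψ ⬝ᵥ (offDiagPart A k).mulVec ψ‖ :=
      fun k => norm_nonneg _
    have hra : ∀ k, |(star ψ ⬝ᵥ (offDiagPart A k).mulVec ψ).re|
        ≤ ‖star ψ ⬝ᵥ (offDiagPart A k).mulVec ψ‖ :=
      fun k => Complex.abs_re_le_norm _
    have hsplit : ∑ k ∈ Finset.range (N+1),
          czLoc M (k:ℤ) * (star ψ ⬝ᵥ (offDiagPart A k).mulVec ψ).re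
        = czLoc M 0 * ∑ k ∈ Finset.range (N+1), (star ψ ⬝ᵥ (offDiagPart A k).mulVec ψ).re
          + ∑ k ∈ Finset.range (N+1), (czLoc M (k:ℤ) - czLoc M 0) *
              (star ψ ⬝ᵥ (offDiagPart A k).mulVec ψ).re := by
      rw [Finset.mul_sum, ← Finset.sum_add_distrib]
      exact Finset.sum_congr rfl fun k _ => by ring
    rw [hsplit]
    have hzero_out : ∑ k ∈ Finset.range (N+1), (czLoc M (k:ℤ) - czLoc M 0) *
          (star ψ ⬝ᵥ (offDiagPart A k).mulVec ψ).re
        = ∑ k ∈ Finset.Ico 1 (N+1), (czLoc M (k:ℤ) - czLoc M 0) *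
          (star ψ ⬝ᵥ (offDiagPart A k).mulVec ψ).re := by
      refine (Finset.sum_subset (fun x hx => ?_) fun x hx hx2 => ?_).symm
      · simp only [Finset.mem_Ico, Finset.mem_range] at *; omega
      · have hx0 : x = 0 := by
          simp only [Finset.mem_Ico, Finset.mem_range] at hx hx2; omega
        subst hx0
        norm_num
    rw [hzero_out, ← Finset.sum_Ico_consecutive _ hM1 hM2]
    have hb1 : ∑ k ∈ Finset.Ico 1 M, (czLoc M (k:ℤ) - czLoc M 0) *
          (star ψ ⬝ᵥ (offDiagPart A k).mulVec ψ).re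
        ≤ czLoc M 0 * (27 / (M:ℝ)^2 * ∑ k ∈ Finset.Ico 1 M,
            (k:ℝ)^2 * ‖star ψ ⬝ᵥ (offDiagPart A k).mulVec ψ‖) := by
      have hstep : ∀ k ∈ Finset.Ico 1 M, (czLoc M (k:ℤ) - czLoc M 0) *
            (star ψ ⬝ᵥ (offDiagPart A k).mulVec ψ).re
          ≤ czLoc M 0 * (27 / (M:ℝ)^2 *
              ((k:ℝ)^2 * ‖star ψ ⬝ᵥ (offDiagPart A k).mulVec ψ‖)) := by
        intro k hk
        simp only [Finset.mem_Ico] at hk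
        have hcle := czLoc_le M k
        have hd := czLoc_diff_le M k (by omega)
        have e1 : (czLoc M (k:ℤ) - czLoc M 0) * (star ψ ⬝ᵥ (offDiagPart A k).mulVec ψ).re
            ≤ (czLoc M 0 - czLoc M (k:ℤ)) *
                ‖star ψ ⬝ᵥ (offDiagPart A k).mulVec ψ‖ := by
          have t1 : (czLoc M 0 - czLoc M (k:ℤ)) *
                (-(star ψ ⬝ᵥ (offDiagPart A k).mulVec ψ).re)
              ≤ (czLoc M 0 - czLoc M (k:ℤ)) *
                ‖star ψ ⬝ᵥ (offDiagPart A k).mulVec ψ‖ :=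
            mul_le_mul_of_nonneg_left (le_trans (neg_le_abs _) (hra k)) (by linarith)
          have t2 : (czLoc M (k:ℤ) - czLoc M 0) *
                (star ψ ⬝ᵥ (offDiagPart A k).mulVec ψ).re
              = (czLoc M 0 - czLoc M (k:ℤ)) *
                (-(star ψ ⬝ᵥ (offDiagPart A k).mulVec ψ).re) := by ring
          linarith
        have e2 : (czLoc M 0 - czLoc M (k:ℤ)) *
              ‖star ψ ⬝ᵥ (offDiagPart A k).mulVec ψ‖
            ≤ ((M:ℝ) * (k:ℝ)^2) *
              ‖star ψ ⬝ᵥ (offDiagPart A k).mulVec ψ‖ :=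
          mul_le_mul_of_nonneg_right hd (hak k)
        have e3 : ((M:ℝ) * (k:ℝ)^2) *
              ‖star ψ ⬝ᵥ (offDiagPart A k).mulVec ψ‖
            ≤ czLoc M 0 * (27 / (M:ℝ)^2 *
              ((k:ℝ)^2 * ‖star ψ ⬝ᵥ (offDiagPart A k).mulVec ψ‖)) := by
          have hcz := czLoc_zero_ge M hM1
          have hM2pos : (0:ℝ) < (M:ℝ)^2 := by positivity
          have key : (M:ℝ) * (k:ℝ)^2 ≤ czLoc M 0 * (27 / (M:ℝ)^2 * (k:ℝ)^2) := by
            have heq : czLoc M 0 * (27 / (M:ℝ)^2 * (k:ℝ)^2)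
                = (czLoc M 0 * 27 * (k:ℝ)^2) / (M:ℝ)^2 := by ring
            rw [heq, le_div_iff₀ hM2pos]
            nlinarith [mul_le_mul_of_nonneg_right hcz (sq_nonneg (k:ℝ))]
          calc ((M:ℝ) * (k:ℝ)^2) * ‖star ψ ⬝ᵥ (offDiagPart A k).mulVec ψ‖
              ≤ (czLoc M 0 * (27 / (M:ℝ)^2 * (k:ℝ)^2)) *
                  ‖star ψ ⬝ᵥ (offDiagPart A k).mulVec ψ‖ :=
                mul_le_mul_of_nonneg_right key (hak k)
            _ = czLoc M 0 * (27 / (M:ℝ)^2 *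
                  ((k:ℝ)^2 * ‖star ψ ⬝ᵥ (offDiagPart A k).mulVec ψ‖)) := by
                ring
        linarith
      calc ∑ k ∈ Finset.Ico 1 M, (czLoc M (k:ℤ) - czLoc M 0) *
            (star ψ ⬝ᵥ (offDiagPart A k).mulVec ψ).re
          ≤ ∑ k ∈ Finset.Ico 1 M, czLoc M 0 * (27 / (M:ℝ)^2 *
              ((k:ℝ)^2 * ‖star ψ ⬝ᵥ (offDiagPart A k).mulVec ψ‖)) :=
            Finset.sum_le_sum hstep
        _ = czLoc M 0 * (27 / (M:ℝ)^2 * ∑ k ∈ Finset.Ico 1 M,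
              (k:ℝ)^2 * ‖star ψ ⬝ᵥ (offDiagPart A k).mulVec ψ‖) := by
            rw [Finset.mul_sum, Finset.mul_sum]
    have hb2 : ∑ k ∈ Finset.Ico M (N+1), (czLoc M (k:ℤ) - czLoc M 0) *
          (star ψ ⬝ᵥ (offDiagPart A k).mulVec ψ).re
        ≤ czLoc M 0 * (27 * ∑ k ∈ Finset.Icc M N,
            ‖star ψ ⬝ᵥ (offDiagPart A k).mulVec ψ‖) := by
      have hstep2 : ∀ k ∈ Finset.Ico M (N+1), (czLoc M (k:ℤ) - czLoc M 0) *
            (star ψ ⬝ᵥ (offDiagPart A k).mulVec ψ).re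
          ≤ czLoc M 0 * (27 * ‖star ψ ⬝ᵥ (offDiagPart A k).mulVec ψ‖) := by
        intro k hk
        simp only [Finset.mem_Ico] at hk
        have hz : czLoc M (k:ℤ) = 0 := czLoc_eq_zero_of_ge M k hk.1
        rw [hz]
        have t1 : czLoc M 0 * (-(star ψ ⬝ᵥ (offDiagPart A k).mulVec ψ).re)
            ≤ czLoc M 0 * ‖star ψ ⬝ᵥ (offDiagPart A k).mulVec ψ‖ :=
          mul_le_mul_of_nonneg_left (le_trans (neg_le_abs _) (hra k)) hS0pos.le
        have t2 : czLoc M 0 * ‖star ψ ⬝ᵥ (offDiagPart A k).mulVec ψ‖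
            ≤ czLoc M 0 * (27 * ‖star ψ ⬝ᵥ (offDiagPart A k).mulVec ψ‖) := by
          nlinarith [hak k, hS0pos.le]
        nlinarith
      calc ∑ k ∈ Finset.Ico M (N+1), (czLoc M (k:ℤ) - czLoc M 0) *
            (star ψ ⬝ᵥ (offDiagPart A k).mulVec ψ).re
          ≤ ∑ k ∈ Finset.Ico M (N+1),
              czLoc M 0 * (27 * ‖star ψ ⬝ᵥ (offDiagPart A k).mulVec ψ‖) :=
            Finset.sum_le_sum hstep2
        _ = czLoc M 0 * (27 * ∑ k ∈ Finset.Icc M N,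
              ‖star ψ ⬝ᵥ (offDiagPart A k).mulVec ψ‖) := by
            rw [Finset.Ico_add_one_right_eq_Icc, Finset.mul_sum, Finset.mul_sum]
    have hfin : czLoc M 0 * R
        = czLoc M 0 * (star ψ ⬝ᵥ A.mulVec ψ).re
          + czLoc M 0 * (27 / (M:ℝ)^2 * ∑ k ∈ Finset.Ico 1 M,
              (k:ℝ)^2 * ‖star ψ ⬝ᵥ (offDiagPart A k).mulVec ψ‖)
          + czLoc M 0 * (27 * ∑ k ∈ Finset.Icc M N,
              ‖star ψ ⬝ᵥ (offDiagPart A k).mulVec ψ‖) := by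
      rw [hR]; ring
    rw [← hlam_re, hfin]
    have h12 := add_le_add hb1 hb2
    linarith
  -- sum of the weights
  have hWsum : ∑ n ∈ S, wLoc ψ M n = czLoc M 0 := by
    have h := key1 ψ M hψ
    rw [Finset.sum_congr rfl (fun n _ => chi_norm ψ M n), ← Complex.ofReal_sum] at h
    rw [hS]
    exact Complex.ofReal_inj.mp h
  -- select a good translate
  have hexists : ∃ n ∈ S, 0 < wLoc ψ M n ∧
      (star (chiLoc ψ M n) ⬝ᵥ A.mulVec (chiLoc ψ M n)).re ≤ R * wLoc ψ M n := by
    by_contra hcon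
    push_neg at hcon
    have hle : ∀ n ∈ S, R * wLoc ψ M n ≤
        (star (chiLoc ψ M n) ⬝ᵥ A.mulVec (chiLoc ψ M n)).re := by
      intro n hn
      rcases (wLoc_nonneg ψ M n).lt_or_eq with hpos | heq
      · exact le_of_lt (hcon n hn hpos)
      · rw [← heq, mul_zero, chi_zero ψ M heq.symm]
        simp
    have hstrict : ∃ n ∈ S, R * wLoc ψ M n <
        (star (chiLoc ψ M n) ⬝ᵥ A.mulVec (chiLoc ψ M n)).re := by
      have hne : ∃ n ∈ S, wLoc ψ M n ≠ 0 := by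
        by_contra hall
        push_neg at hall
        rw [Finset.sum_eq_zero hall] at hWsum
        linarith
      obtain ⟨n, hn, hnz⟩ := hne
      exact ⟨n, hn, hcon n hn (lt_of_le_of_ne (wLoc_nonneg ψ M n) (Ne.symm hnz))⟩
    have hsum := Finset.sum_lt_sum hle hstrict
    rw [← Finset.mul_sum, hWsum, hTr_sum] at hsum
    nlinarith
  obtain ⟨n, hnS, hwpos, hTle⟩ := hexists
  have hnmem : 1 - (M:ℤ) ≤ n ∧ n ≤ (N:ℤ) := by
    simpa [hS, Finset.mem_Icc] using hnS
  refine ⟨(min ((N:ℤ) + 1 - M) (max 0 n)).toNat, by omega, ?_⟩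
  set r : ℝ := (Real.sqrt (wLoc ψ M n))⁻¹ with hr
  have hr2 : r^2 * wLoc ψ M n = 1 := by
    rw [hr, inv_pow, Real.sq_sqrt (le_of_lt hwpos)]
    exact inv_mul_cancel₀ (ne_of_gt hwpos)
  refine ⟨fun j => ((r:ℝ):ℂ) * chiLoc ψ M n j, ?_, ?_, ?_⟩
  · -- unit norm
    have hφ : (fun j => ((r:ℝ):ℂ) * chiLoc ψ M n j) = ((r:ℂ) • chiLoc ψ M n) := rfl
    rw [hφ, star_smul, smul_dotProduct, dotProduct_smul, chi_norm ψ M n,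
      smul_eq_mul, smul_eq_mul, Complex.star_def, Complex.conj_ofReal]
    rw [show ((r:ℂ) * ((r:ℂ) * ((wLoc ψ M n : ℝ):ℂ))) = (((r^2 * wLoc ψ M n : ℝ)):ℂ) by
      push_cast; ring]
    rw [hr2]
    norm_num
  · -- support
    intro j hj
    have hj' := j.isLt
    have hfr0 : frLoc M ((j:ℤ) - n) = 0 := by
      apply frLoc_eq_zero
      rcases hj with h | h
      · left; omega
      · right; omega
    show ((r:ℝ):ℂ) * chiLoc ψ M n j = 0
    simp [chiLoc, hfr0]
  · -- energy bound
    have hφ : (fun j => ((r:ℝ):ℂ) * chiLoc ψ M n j) = ((r:ℂ) • chiLoc ψ M n) := rfl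
    rw [hφ, star_smul, Matrix.mulVec_smul, smul_dotProduct, dotProduct_smul,
      smul_eq_mul, smul_eq_mul, Complex.star_def, Complex.conj_ofReal]
    rw [show ((r:ℂ) * ((r:ℂ) * (star (chiLoc ψ M n) ⬝ᵥ A.mulVec (chiLoc ψ M n))))
        = (((r*r : ℝ)):ℂ) * (star (chiLoc ψ M n) ⬝ᵥ A.mulVec (chiLoc ψ M n)) by
      push_cast; ring]
    rw [Complex.mul_re]
    simp only [Complex.ofReal_re, Complex.ofReal_im, zero_mul, sub_zero]
    have h1 : r * r * (star (chiLoc ψ M n) ⬝ᵥ A.mulVec (chiLoc ψ M n)).re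
        ≤ r * r * (R * wLoc ψ M n) := by
      apply mul_le_mul_of_nonneg_left hTle
      positivity
    have h2 : r * r * (R * wLoc ψ M n) = R := by
      have : r * r * (R * wLoc ψ M n) = R * (r^2 * wLoc ψ M n) := by ring
      rw [this, hr2, mul_one]
    rw [h2] at h1
    exact h1
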